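/- Let m be an integer with m ≥ 2 and let T be a sequence over C_m ⊕ C_m of length 3 such that T^{m−1} (the sequence of length 3m − 3 in which each element of T is repeated m − 1 times as often) has no short zero-sum subsequence. Then T = f_1 · f_2 · (−x·f_1 + f_2) for some basis {f_1, f_2} of C_m ⊕ C_m and some integer x ∈ [1, m − 1] with gcd(x, m) = 1 and x ≤ m/2. In particular, for each f in the support of T, the sequence (f^{−1}T)^{m−1} (the sequence T with one occurrence of f removed, repeated m − 1 times) has no nonempty zero-sum subsequence. -/

import Mathlib

section ZsAux
variable {m : ℕ} [NeZero m]

lemma zs_val_add_or (x y : ZMod m) :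
    (x+y).val = x.val + y.val ∨ (x+y).val + m = x.val + y.val := by
  have h := ZMod.val_add x y
  have hx := ZMod.val_lt x; have hy := ZMod.val_lt y
  rcases lt_or_ge (x.val + y.val) m with h' | h'
  · left; rw [h, Nat.mod_eq_of_lt h']
  · right; rw [h, Nat.mod_eq_sub_mod h', Nat.mod_eq_of_lt (by omega)]; omega

lemma zs_val_pos {x : ZMod m} (h : x ≠ 0) : 1 ≤ x.val := by
  have : ¬ x.val = 0 := fun hv => h (ZMod.val_eq_zero x |>.mp hv)
  omega

lemma zs_val_neg {x : ZMod m} (h : x ≠ 0) : (-x).val = m - x.val := by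
  rw [ZMod.neg_val, if_neg h]

lemma zs_cast_val (x : ZMod m) : ((x.val : ℕ) : ZMod m) = x := ZMod.natCast_rightInverse x

lemma zs_eq_one_of_val {x : ZMod m} (h : x.val = 1) : x = 1 := by
  have := zs_cast_val x; rw [h] at this; simpa using this.symm

lemma zs_unit_mul_ne {u k : ZMod m} (hu : IsUnit u) (hk : k ≠ 0) : k * u ≠ 0 := by
  obtain ⟨v, hv⟩ := hu.exists_right_inv
  intro h
  apply hk
  calc k = k * (u * v) := by rw [hv, mul_one]
    _ = (k * u) * v := by ring
    _ = 0 := by rw [h, zero_mul]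

lemma zs_unit_ne_zero (hm : 2 ≤ m) {u : ZMod m} (hu : IsUnit u) : u ≠ 0 := by
  haveI : Fact (1 < m) := ⟨by omega⟩
  obtain ⟨v, hv⟩ := hu.exists_right_inv
  intro h; rw [h, zero_mul] at hv; exact zero_ne_one hv

lemma zs_killer {t : ZMod m} (h : ¬ IsUnit t) : ∃ k : ZMod m, k ≠ 0 ∧ k * t = 0 := by
  have : ¬ Function.Injective (fun x : ZMod m => x * t) := by
    intro hinj
    obtain ⟨x, hx⟩ := Finite.injective_iff_surjective.mp hinj 1
    exact h (IsUnit.of_mul_eq_one x (by rw [mul_comm]; exact hx))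
  rw [Function.not_injective_iff] at this
  obtain ⟨x, y, hxy, hne⟩ := this
  exact ⟨x - y, sub_ne_zero.mpr hne, by simp only [sub_mul]; rw [hxy]; ring_nf⟩

lemma zs_val_sub_one {k : ZMod m} (h0 : k ≠ 0) (h1 : k ≠ 1) :
    (k-1).val = k.val - 1 ∧ 2 ≤ k.val := by
  have hpos := zs_val_pos h0
  have hlt := ZMod.val_lt k
  have h2 : 2 ≤ k.val := by
    by_contra h
    have h1' : k.val = 1 := by omega
    exact h1 (zs_eq_one_of_val h1')
  constructor
  · have : (k - 1 : ZMod m) = ((k.val - 1 : ℕ) : ZMod m) := by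
      push_cast [Nat.cast_sub (by omega : 1 ≤ k.val)]
      rw [zs_cast_val]
    rw [this, ZMod.val_cast_of_lt (by omega)]
  · exact h2

lemma zs_step {u : ZMod m} (hu : IsUnit u) {k : ZMod m} (h0 : k ≠ 0) (h1 : k ≠ 1) :
    ((k*u).val = ((k-1)*u).val + u.val ∨ (k*u).val + m = ((k-1)*u).val + u.val)
    ∧ 1 ≤ (k*u).val ∧ 1 ≤ ((k-1)*u).val := by
  have hk1 : (k - 1) ≠ 0 := sub_ne_zero.mpr h1
  have he : k * u = (k-1)*u + u := by ring
  refine ⟨?_, zs_val_pos (zs_unit_mul_ne hu h0), zs_val_pos (zs_unit_mul_ne hu hk1)⟩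
  rw [he]; exact zs_val_add_or _ _

end ZsAux

lemma zs_key3 (m : ℕ) [NeZero m] (u1 u2 u3 : ZMod m)
    (h1 : IsUnit u1) (h2 : IsUnit u2) (h3 : IsUnit u3)
    (K : ∀ k : ZMod m, k ≠ 0 → (k*u1).val + (k*u2).val + (k*u3).val = m + k.val)
    (ha2 : 2 ≤ u1.val) (hb2 : 2 ≤ u2.val) (hc : m + 1 ≤ 2 * u3.val) : False := by
  have hlt1 := ZMod.val_lt u1; have hlt2 := ZMod.val_lt u2; have hlt3 := ZMod.val_lt u3
  have hm3 : 3 ≤ m := by omega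
  haveI : Fact (1 < m) := ⟨by omega⟩
  have hsum : u1.val + u2.val + u3.val = m + 1 := by
    have := K 1 one_ne_zero
    simpa [ZMod.val_one] using this
  set a := u1.val with hadef
  set b := u2.val with hbdef
  set c := u3.val with hcdef
  set s : ℕ := a + b - 1 with hsdef
  have hs3 : 3 ≤ s := by omega
  have hsc : s = m - c := by omega
  have hs2 : 2*s + 1 ≤ m := by omega
  have hσ3 : ((s : ℕ) : ZMod m) = -u3 := by
    rw [hsc, Nat.cast_sub (by omega : c ≤ m), ZMod.natCast_self, zero_sub, hcdef, zs_cast_val]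
  set σ : ZMod m := ((s : ℕ) : ZMod m) with hσdef
  have hσ3' : σ = -u3 := hσ3
  have hσval : σ.val = s := ZMod.val_cast_of_lt (by omega)
  have hσu : IsUnit σ := by rw [hσ3]; exact h3.neg
  have hσ0 : σ ≠ 0 := zs_unit_ne_zero (by omega) hσu
  -- exactly-one-wrap lemma
  have E : ∀ k : ZMod m, k ≠ 0 → k ≠ 1 →
      (((k*u1).val < a ∧ b + 1 ≤ (k*u2).val ∧ c + 1 ≤ (k*u3).val) ∨
       ((k*u2).val < b ∧ a + 1 ≤ (k*u1).val ∧ c + 1 ≤ (k*u3).val) ∨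
       ((k*u3).val < c ∧ a + 1 ≤ (k*u1).val ∧ b + 1 ≤ (k*u2).val)) := by
    intro k hk0 hk1
    obtain ⟨hv, h2v⟩ := zs_val_sub_one hk0 hk1
    have hk10 : (k - 1) ≠ 0 := sub_ne_zero.mpr hk1
    obtain ⟨D1, p1, q1⟩ := zs_step h1 hk0 hk1
    obtain ⟨D2, p2, q2⟩ := zs_step h2 hk0 hk1
    obtain ⟨D3, p3, q3⟩ := zs_step h3 hk0 hk1
    have K1 := K k hk0
    have K2 := K (k-1) hk10
    have l1 := ZMod.val_lt (k*u1); have l2 := ZMod.val_lt (k*u2); have l3 := ZMod.val_lt (k*u3)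
    have l1' := ZMod.val_lt ((k-1)*u1); have l2' := ZMod.val_lt ((k-1)*u2)
    have l3' := ZMod.val_lt ((k-1)*u3)
    have lk := ZMod.val_lt k
    omega
  obtain ⟨w1, hw1⟩ := h1.exists_right_inv
  obtain ⟨w2, hw2⟩ := h2.exists_right_inv
  -- generic machinery for an index (u, w) with "growth" fact
  have MACH : ∀ (u w : ZMod m), u * w = 1 → 2 ≤ u.val → u.val < m →
      (∀ k : ZMod m, k ≠ 0 → k ≠ 1 → (k*u).val < u.val → c + 1 ≤ (k*u3).val) →
      (∀ i : ℕ, i ≤ u.val → ((i : ZMod m) * (σ * w)).val = i * (σ * w).val)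
        ∧ u.val * (σ * w).val = s := by
    intro u w huw hu2 hulm grow
    have hu : IsUnit u := IsUnit.of_mul_eq_one w huw
    have hwu : w * u = 1 := by rw [mul_comm]; exact huw
    -- Claim A
    have CA : ∀ i : ℕ, 1 ≤ i → i ≤ u.val - 1 →
        ((i : ZMod m) * (σ * w)).val ≤ s - 1 ∧ 1 ≤ ((i : ZMod m) * (σ * w)).val := by
      intro i hi1 hi2
      have hilt : i < m := by omega
      have hvi : ((i : ZMod m)).val = i := ZMod.val_cast_of_lt hilt
      set k : ZMod m := (i : ZMod m) * w with hkdef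
      have hku : k * u = (i : ZMod m) := by
        rw [hkdef, mul_assoc, hwu, mul_one]
      have hi0 : (i : ZMod m) ≠ 0 := by
        intro h; rw [h] at hvi; simp only [ZMod.val_zero] at hvi; omega
      have hk0 : k ≠ 0 := by
        intro h; rw [h, zero_mul] at hku; exact hi0 hku.symm
      have hk1 : k ≠ 1 := by
        intro h; rw [h, one_mul] at hku; rw [← hku] at hvi; omega
      have hwrap : (k*u).val < u.val := by rw [hku, hvi]; omega
      have hgrow := grow k hk0 hk1 hwrap
      have hkU : (i : ZMod m) * (σ * w) = k * σ := by rw [hkdef]; ring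
      have hk3 : k * u3 ≠ 0 := zs_unit_mul_ne h3 hk0
      have hneg : k * σ = -(k * u3) := by rw [hσ3']; ring
      have hval : (k * σ).val = m - (k*u3).val := by rw [hneg, zs_val_neg hk3]
      have hl3 := ZMod.val_lt (k*u3)
      have hkσ0 : k * σ ≠ 0 := zs_unit_mul_ne hσu hk0
      have hp := zs_val_pos hkσ0
      rw [hkU]
      omega
    -- no-wrap induction
    have NW : ∀ i : ℕ, i ≤ u.val → ((i : ZMod m) * (σ * w)).val = i * (σ * w).val := by
      intro i
      induction i with
      | zero => intro _; simp
      | succ n ih =>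
        intro hle
        have hn := ih (by omega)
        have hU1 : (σ * w).val ≤ s - 1 := by
          have := CA 1 le_rfl (by omega)
          simpa using this.1
        have hbound : n * (σ * w).val ≤ s - 1 := by
          rcases Nat.eq_zero_or_pos n with h | h
          · rw [h, zero_mul]; omega
          · have := CA n h (by omega)
            rw [hn] at this; exact this.1
        have hcast : ((n+1 : ℕ) : ZMod m) * (σ * w) = (n : ZMod m) * (σ * w) + (σ * w) := by
          push_cast; ring
        rw [hcast]
        rcases zs_val_add_or ((n : ZMod m) * (σ * w)) (σ * w) with h | h
        · rw [h, hn]; ring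
        · rw [hn] at h; omega
    refine ⟨NW, ?_⟩
    have hfin : ((u.val : ℕ) : ZMod m) * (σ * w) = σ := by
      rw [zs_cast_val]
      calc u * (σ * w) = σ * (u * w) := by ring
        _ = σ := by rw [huw, mul_one]
    have := NW u.val le_rfl
    rw [hfin, hσval] at this
    omega
  -- growth facts from E
  have grow1 : ∀ k : ZMod m, k ≠ 0 → k ≠ 1 → (k*u1).val < u1.val → c + 1 ≤ (k*u3).val := by
    intro k hk0 hk1 hw
    rcases E k hk0 hk1 with h | h | h <;> omega
  have grow2 : ∀ k : ZMod m, k ≠ 0 → k ≠ 1 → (k*u2).val < u2.val → c + 1 ≤ (k*u3).val := by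
    intro k hk0 hk1 hw
    rcases E k hk0 hk1 with h | h | h <;> omega
  obtain ⟨NW1, hsa⟩ := MACH u1 w1 hw1 ha2 hlt1 grow1
  obtain ⟨NW2, hsb⟩ := MACH u2 w2 hw2 hb2 hlt2 grow2
  -- final contradiction at τ = σ⁻¹
  obtain ⟨τ, hτ⟩ := hσu.exists_right_inv
  have hτσ : τ * σ = 1 := by rw [mul_comm]; exact hτ
  have hτσval : (τ * σ).val = 1 := by rw [hτσ, ZMod.val_one]
  have hτ0 : τ ≠ 0 := by
    intro h; rw [h, zero_mul] at hτσ; exact zero_ne_one hτσ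
  have hτ1 : τ ≠ 1 := by
    intro h; rw [h, one_mul] at hτσ
    rw [hτσ] at hσval; rw [ZMod.val_one] at hσval; omega
  have FIN : ∀ (u w : ZMod m), u * w = 1 →
      (∀ i : ℕ, i ≤ u.val → ((i : ZMod m) * (σ * w)).val = i * (σ * w).val) →
      u.val * (σ * w).val = s →
      (τ * u).val < u.val → u.val = s := by
    intro u w huw NW hsu hwrap
    have hu : IsUnit u := IsUnit.of_mul_eq_one w huw
    set j : ℕ := (τ * u).val with hjdef
    have hj1 : 1 ≤ j := zs_val_pos (zs_unit_mul_ne hu hτ0)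
    have hτeq : τ = (j : ZMod m) * w := by
      have hcast : ((j : ℕ) : ZMod m) = τ * u := zs_cast_val (τ * u)
      rw [hcast, mul_assoc, huw, mul_one]
    have hτστ : τ * σ = (j : ZMod m) * (σ * w) := by rw [hτeq]; ring
    have hNWj := NW j (by omega)
    rw [← hτστ, hτσval] at hNWj
    have hUv : (σ * w).val = 1 := by
      have hdvd : (σ * w).val ∣ 1 := ⟨j, by rw [mul_comm]; exact hNWj⟩
      exact Nat.dvd_one.mp hdvd
    rw [hUv, mul_one] at hsu
    exact hsu
  rcases E τ hτ0 hτ1 with h | h | h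
  · have := FIN u1 w1 hw1 NW1 hsa h.1
    omega
  · have := FIN u2 w2 hw2 NW2 hsb h.1
    omega
  · -- wrap at u3 impossible
    have hneg : τ * u3 = -(τ * σ) := by rw [hσ3']; ring
    have h0 : τ * σ ≠ 0 := zs_unit_mul_ne hσu hτ0
    have : (τ * u3).val = m - 1 := by rw [hneg, zs_val_neg h0, hτσval]
    omega

lemma zs_key (m : ℕ) (hm : 2 ≤ m) (u1 u2 u3 : ZMod m)
    (h1 : IsUnit u1) (h2 : IsUnit u2) (h3 : IsUnit u3)
    (K : ∀ k : ZMod m, k ≠ 0 → (k*u1).val + (k*u2).val + (k*u3).val = m + k.val) :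
    u1 = 1 ∨ u2 = 1 ∨ u3 = 1 := by
  haveI : NeZero m := ⟨by omega⟩
  rcases eq_or_lt_of_le hm with hm2 | hm3
  · -- m = 2
    left
    have hdec : ∀ u : ZMod 2, IsUnit u → u = 1 := by decide
    subst hm2
    exact hdec u1 h1
  · -- m ≥ 3
    haveI : Fact (1 < m) := ⟨by omega⟩
    by_contra hcon
    push_neg at hcon
    obtain ⟨hn1, hn2, hn3⟩ := hcon
    have hval2 : ∀ u : ZMod m, IsUnit u → u ≠ 1 → 2 ≤ u.val := by
      intro u hu hne
      have hp := zs_val_pos (zs_unit_ne_zero hm hu)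
      by_contra h
      exact hne (zs_eq_one_of_val (by omega))
    have ha2 := hval2 u1 h1 hn1
    have hb2 := hval2 u2 h2 hn2
    have hc2 := hval2 u3 h3 hn3
    have hsum : u1.val + u2.val + u3.val = m + 1 := by
      have := K 1 one_ne_zero
      simpa [ZMod.val_one] using this
    -- k = 2 analysis
    have h2cast : (2 : ZMod m) = ((2 : ℕ) : ZMod m) := by push_cast; ring
    have hv2 : (2 : ZMod m).val = 2 := by rw [h2cast, ZMod.val_cast_of_lt (by omega)]
    have h20 : (2 : ZMod m) ≠ 0 := by
      intro h; rw [h, ZMod.val_zero] at hv2; omega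
    have h21 : (2 : ZMod m) ≠ 1 := by
      intro h; rw [h, ZMod.val_one] at hv2; omega
    have hsub : (2 : ZMod m) - 1 = 1 := by ring
    obtain ⟨D1, p1, _⟩ := zs_step h1 h20 h21
    obtain ⟨D2, p2, _⟩ := zs_step h2 h20 h21
    obtain ⟨D3, p3, _⟩ := zs_step h3 h20 h21
    rw [hsub, one_mul] at D1 D2 D3
    have K2 := K 2 h20
    rw [hv2] at K2
    have l1 := ZMod.val_lt (2*u1); have l2 := ZMod.val_lt (2*u2); have l3 := ZMod.val_lt (2*u3)
    have lv1 := ZMod.val_lt u1; have lv2 := ZMod.val_lt u2; have lv3 := ZMod.val_lt u3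
    -- exactly one of D1,D2,D3 is a wrap
    have Kperm3 : ∀ k : ZMod m, k ≠ 0 → (k*u1).val + (k*u2).val + (k*u3).val = m + k.val :=
      K
    have Kperm1 : ∀ k : ZMod m, k ≠ 0 → (k*u2).val + (k*u3).val + (k*u1).val = m + k.val := by
      intro k hk; have := K k hk; omega
    have Kperm2 : ∀ k : ZMod m, k ≠ 0 → (k*u3).val + (k*u1).val + (k*u2).val = m + k.val := by
      intro k hk; have := K k hk; omega
    rcases D1 with d1 | d1 <;> rcases D2 with d2 | d2 <;> rcases D3 with d3 | d3
    · omega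
    · exact zs_key3 m u1 u2 u3 h1 h2 h3 Kperm3 ha2 hb2 (by omega)
    · exact zs_key3 m u3 u1 u2 h3 h1 h2 Kperm2 hc2 ha2 (by omega)
    · omega
    · exact zs_key3 m u2 u3 u1 h2 h3 h1 Kperm1 hb2 hc2 (by omega)
    · omega
    · omega
    · omega

lemma zs_div_absurd (m j f g : ℕ) (hm : 2 ≤ m) (h : f - g = m * j) (hg : g ≤ m - 1)
    (h1 : m + 1 ≤ f) (h2 : f ≤ 2*m-1) : f = m + g := by
  have hj : j = 0 ∨ j = 1 ∨ 2 ≤ j := by omega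
  rcases hj with hj | hj | hj
  · subst hj; simp at h; omega
  · subst hj; simp at h; omega
  · have : m * 2 ≤ m * j := Nat.mul_le_mul_left m hj
    omega

def zs_pairIndep (m : ℕ) (P Q : ZMod m × ZMod m) : Prop :=
  ∀ x y : ZMod m, x • P + y • Q = 0 → x = 0 ∧ y = 0

lemma zs_pair_swap {m : ℕ} {P Q : ZMod m × ZMod m} (h : zs_pairIndep m P Q) :
    zs_pairIndep m Q P := by
  intro x y hxy
  have := h y x (by rw [add_comm]; exact hxy)
  exact ⟨this.2, this.1⟩

lemma zs_pair_ne {m : ℕ} (hm : 2 ≤ m) {P Q : ZMod m × ZMod m} (h : zs_pairIndep m P Q) :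
    P ≠ Q := by
  haveI : NeZero m := ⟨by omega⟩
  haveI : Fact (1 < m) := ⟨by omega⟩
  intro he
  have h0 : (1 : ZMod m) • P + (-1 : ZMod m) • Q = 0 := by rw [he]; module
  exact one_ne_zero (h 1 (-1) h0).1

lemma zs_pair_surj (m : ℕ) (hm : 2 ≤ m) (P Q : ZMod m × ZMod m) (h : zs_pairIndep m P Q) :
    ∀ g : ZMod m × ZMod m, ∃ x y : ZMod m, g = x • P + y • Q := by
  haveI : NeZero m := ⟨by omega⟩
  set f : (ZMod m × ZMod m) → (ZMod m × ZMod m) := fun g => g.1 • P + g.2 • Q with hf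
  have hinj : Function.Injective f := by
    intro g1 g2 hg
    have h0 : (g1.1 - g2.1) • P + (g1.2 - g2.2) • Q = 0 := by
      have e : (g1.1 - g2.1) • P + (g1.2 - g2.2) • Q
          = (g1.1 • P + g1.2 • Q) - (g2.1 • P + g2.2 • Q) := by module
      rw [e]
      have : f g1 = f g2 := hg
      rw [hf] at this
      simp only [] at this
      rw [this, sub_self]
    obtain ⟨h1, h2⟩ := h _ _ h0
    have e1 : g1.1 = g2.1 := by rwa [sub_eq_zero] at h1
    have e2 : g1.2 = g2.2 := by rwa [sub_eq_zero] at h2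
    exact Prod.ext e1 e2
  have hsurj := Finite.injective_iff_surjective.mp hinj
  intro g
  obtain ⟨xy, hxy⟩ := hsurj g
  exact ⟨xy.1, xy.2, hxy.symm⟩

lemma zs_basis (m : ℕ) (hm : 2 ≤ m) (P Q : ZMod m × ZMod m) (h : zs_pairIndep m P Q) :
    (∀ a b : ℤ, a • P + b • Q = 0 → a • P = 0 ∧ b • Q = 0) ∧
    AddSubgroup.closure ({P, Q} : Set (ZMod m × ZMod m)) = ⊤ := by
  haveI : NeZero m := ⟨by omega⟩
  constructor
  · intro a b hab
    have h0 : ((a : ZMod m)) • P + ((b : ZMod m)) • Q = 0 := by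
      rw [Int.cast_smul_eq_zsmul, Int.cast_smul_eq_zsmul]; exact hab
    obtain ⟨ha, hb⟩ := h _ _ h0
    constructor
    · rw [← Int.cast_smul_eq_zsmul (ZMod m), ha, zero_smul]
    · rw [← Int.cast_smul_eq_zsmul (ZMod m), hb, zero_smul]
  · rw [eq_top_iff]
    intro g _
    obtain ⟨x, y, hg⟩ := zs_pair_surj m hm P Q h g
    rw [hg]
    apply AddSubgroup.add_mem
    · rw [← zs_cast_val x, Nat.cast_smul_eq_nsmul]
      exact AddSubgroup.nsmul_mem _ (AddSubgroup.subset_closure (by simp)) _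
    · rw [← zs_cast_val y, Nat.cast_smul_eq_nsmul]
      exact AddSubgroup.nsmul_mem _ (AddSubgroup.subset_closure (by simp)) _

lemma zs_nozero (m : ℕ) (hm : 2 ≤ m) (P Q : ZMod m × ZMod m) (h : zs_pairIndep m P Q) :
    ¬ ∃ U ≤ (m-1) • ({P, Q} : Multiset (ZMod m × ZMod m)), U ≠ 0 ∧ U.sum = 0 := by
  haveI : NeZero m := ⟨by omega⟩
  have hne : P ≠ Q := zs_pair_ne hm h
  rintro ⟨U, hle, hne0, hsum⟩
  have hrep : (m-1) • ({P,Q} : Multiset (ZMod m × ZMod m))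
      = Multiset.replicate (m-1) P + Multiset.replicate (m-1) Q := by
    have e : ({P,Q} : Multiset (ZMod m × ZMod m)) = {P} + {Q} := by
      rw [Multiset.singleton_add]; rfl
    rw [e, smul_add, Multiset.nsmul_singleton, Multiset.nsmul_singleton]
  have hmem : ∀ x ∈ U, x = P ∨ x = Q := by
    intro x hx
    have := Multiset.mem_of_le hle hx
    rw [hrep, Multiset.mem_add] at this
    rcases this with h' | h'
    · exact Or.inl (Multiset.eq_of_mem_replicate h')
    · exact Or.inr (Multiset.eq_of_mem_replicate h')
  have hcP : U.count P ≤ m - 1 := by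
    have := Multiset.count_le_of_le P hle
    rw [hrep, Multiset.count_add, Multiset.count_replicate_self,
      Multiset.count_replicate, if_neg (Ne.symm hne)] at this
    omega
  have hcQ : U.count Q ≤ m - 1 := by
    have := Multiset.count_le_of_le Q hle
    rw [hrep, Multiset.count_add, Multiset.count_replicate_self,
      Multiset.count_replicate, if_neg hne] at this
    omega
  have hUsum : U.sum = U.count P • P + U.count Q • Q := by
    have h1 : U.sum = ∑ a ∈ U.toFinset, U.count a • a := by
      have := Finset.sum_multiset_map_count U (id : (ZMod m × ZMod m) → _)
      simpa using this
    have hsubF : U.toFinset ⊆ ({P, Q} : Finset (ZMod m × ZMod m)) := by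
      intro x hx
      rw [Multiset.mem_toFinset] at hx
      rcases hmem x hx with h' | h' <;> simp [h']
    rw [h1, Finset.sum_subset hsubF (by
      intro x _ hxs
      rw [Multiset.mem_toFinset] at hxs
      rw [Multiset.count_eq_zero_of_notMem hxs, zero_smul])]
    rw [Finset.sum_insert (by simp [hne]), Finset.sum_singleton]
  have h0 : ((U.count P : ZMod m)) • P + ((U.count Q : ZMod m)) • Q = 0 := by
    rw [Nat.cast_smul_eq_nsmul, Nat.cast_smul_eq_nsmul, ← hUsum]; exact hsum
  obtain ⟨hP0, hQ0⟩ := h _ _ h0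
  have hcp0 : U.count P = 0 := by
    have hv := ZMod.val_cast_of_lt (show U.count P < m by omega)
    rw [hP0, ZMod.val_zero] at hv
    omega
  have hcq0 : U.count Q = 0 := by
    have hv := ZMod.val_cast_of_lt (show U.count Q < m by omega)
    rw [hQ0, ZMod.val_zero] at hv
    omega
  obtain ⟨x, hx⟩ := Multiset.exists_mem_of_ne_zero hne0
  have := Multiset.count_pos.mpr hx
  rcases hmem x hx with h' | h' <;> subst h' <;> omega

lemma zs_finish (m : ℕ) (hm : 2 ≤ m) (T : Multiset (ZMod m × ZMod m))
    (P Q R : ZMod m × ZMod m)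
    (hT : T = {P, Q, R}) (hPQ : zs_pairIndep m P Q) (ξ : ZMod m) (hξ : IsUnit ξ)
    (h2x : 2 * ξ.val ≤ m) (hR : (-ξ) • P + Q = R) :
    ∃ (f1 f2 : ZMod m × ZMod m) (x : ℕ),
      (∀ a b : ℤ, a • f1 + b • f2 = 0 → a • f1 = 0 ∧ b • f2 = 0) ∧
      AddSubgroup.closure ({f1, f2} : Set (ZMod m × ZMod m)) = ⊤ ∧
      1 ≤ x ∧ x ≤ m - 1 ∧ Nat.gcd x m = 1 ∧ 2 * x ≤ m ∧
      T = {f1, f2, (-(x : ℤ)) • f1 + f2} := by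
  haveI : NeZero m := ⟨by omega⟩
  obtain ⟨hind, hclo⟩ := zs_basis m hm P Q hPQ
  have hξ0 : ξ ≠ 0 := zs_unit_ne_zero hm hξ
  have hgcd : Nat.gcd ξ.val m = 1 := by
    have hcop := ZMod.val_coe_unit_coprime hξ.unit
    rw [IsUnit.unit_spec] at hcop
    exact hcop
  refine ⟨P, Q, ξ.val, hind, hclo, zs_val_pos hξ0, by have := ZMod.val_lt ξ; omega,
    hgcd, h2x, ?_⟩
  have hcast : (-(ξ.val : ℤ)) • P + Q = R := by
    have e : ((-(ξ.val : ℤ) : ℤ) : ZMod m) = -ξ := by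
      push_cast [zs_cast_val]
      ring
    rw [← Int.cast_smul_eq_zsmul (ZMod m), e]
    exact hR
  rw [hcast]
  exact hT

lemma zs_swap_pair {α : Type*} (b c : α) : (b ::ₘ ({c} : Multiset α)) = c ::ₘ {b} := by
  rw [← Multiset.cons_zero c, ← Multiset.cons_zero b, Multiset.cons_swap]

lemma zs_perm_acb {α : Type*} (a b c : α) : ({a,b,c} : Multiset α) = {a,c,b} := by
  simp only [Multiset.insert_eq_cons]; rw [zs_swap_pair]

lemma zs_perm_bac {α : Type*} (a b c : α) : ({a,b,c} : Multiset α) = {b,a,c} := by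
  simp only [Multiset.insert_eq_cons]; rw [Multiset.cons_swap]

lemma zs_perm_bca {α : Type*} (a b c : α) : ({a,b,c} : Multiset α) = {b,c,a} := by
  simp only [Multiset.insert_eq_cons]; rw [Multiset.cons_swap, zs_swap_pair]

lemma zs_perm_cab {α : Type*} (a b c : α) : ({a,b,c} : Multiset α) = {c,a,b} := by
  simp only [Multiset.insert_eq_cons]; rw [zs_swap_pair, Multiset.cons_swap]

lemma zs_perm_cba {α : Type*} (a b c : α) : ({a,b,c} : Multiset α) = {c,b,a} := by
  rw [zs_perm_cab]; simp only [Multiset.insert_eq_cons]; rw [zs_swap_pair]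


/-- If `T` is a sequence of length 3 over `C_m ⊕ C_m` such that `T^{m-1}`
has no short zero-sum subsequence, then `T = f₁ · f₂ · (-x f₁ + f₂)` for a basis
`{f₁, f₂}` and some `x ∈ [1, m-1]` with `gcd(x, m) = 1` and `x ≤ m/2`; in particular,
for each `f` in the support of `T`, `(f⁻¹T)^{m-1}` has no nonempty zero-sum
subsequence. -/
theorem stmt_18 (m : ℕ) (hm : 2 ≤ m) (T : Multiset (ZMod m × ZMod m))
    (hT : T.card = 3)
    (hnoshort : ¬ ∃ U ≤ (m - 1) • T, U ≠ 0 ∧ U.sum = 0 ∧ Multiset.card U ≤ m) :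
    (∃ (f1 f2 : ZMod m × ZMod m) (x : ℕ),
      (∀ a b : ℤ, a • f1 + b • f2 = 0 → a • f1 = 0 ∧ b • f2 = 0) ∧
      AddSubgroup.closure ({f1, f2} : Set (ZMod m × ZMod m)) = ⊤ ∧
      1 ≤ x ∧ x ≤ m - 1 ∧ Nat.gcd x m = 1 ∧ 2 * x ≤ m ∧
      T = {f1, f2, (-(x : ℤ)) • f1 + f2}) ∧
    ∀ f ∈ T, ¬ ∃ U ≤ (m - 1) • (T.erase f), U ≠ 0 ∧ U.sum = 0 := by
  haveI : NeZero m := ⟨by omega⟩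
  haveI : Fact (1 < m) := ⟨by omega⟩
  obtain ⟨A, B, C, hABC⟩ := Multiset.card_eq_three.mp hT
  subst hABC
  -- step 1 : numeric form of the hypothesis
  have Hnat : ∀ α β γ : ℕ, α ≤ m-1 → β ≤ m-1 → γ ≤ m-1 → 1 ≤ α+β+γ → α+β+γ ≤ m →
      α • A + β • B + γ • C ≠ 0 := by
    intro α β γ hα hβ hγ h1 h2 hzero
    apply hnoshort
    refine ⟨Multiset.replicate α A + Multiset.replicate β B + Multiset.replicate γ C,
      ?_, ?_, ?_, ?_⟩
    · have hsplit : ({A,B,C} : Multiset (ZMod m × ZMod m)) = {A} + ({B} + {C}) := by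
        rw [Multiset.singleton_add, Multiset.singleton_add]; rfl
      rw [hsplit, smul_add, smul_add, Multiset.nsmul_singleton, Multiset.nsmul_singleton,
        Multiset.nsmul_singleton, ← add_assoc]
      exact add_le_add (add_le_add ((Multiset.replicate_le_replicate A).mpr hα)
        ((Multiset.replicate_le_replicate B).mpr hβ)) ((Multiset.replicate_le_replicate C).mpr hγ)
    · intro h0
      have := congrArg Multiset.card h0
      simp only [Multiset.card_add, Multiset.card_replicate, Multiset.card_zero] at this
      omega
    · rw [Multiset.sum_add, Multiset.sum_add, Multiset.sum_replicate, Multiset.sum_replicate,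
        Multiset.sum_replicate]
      exact hzero
    · rw [Multiset.card_add, Multiset.card_add, Multiset.card_replicate,
        Multiset.card_replicate, Multiset.card_replicate]
      exact h2
  -- step 2 : ZMod-scalar form
  have Hz : ∀ x y z : ZMod m, x • A + y • B + z • C = 0 → x.val + y.val + z.val ≤ m →
      x = 0 ∧ y = 0 ∧ z = 0 := by
    intro x y z h0 hle
    by_contra hcon
    have h1 : 1 ≤ x.val + y.val + z.val := by
      by_contra h
      push_neg at h
      apply hcon
      refine ⟨?_, ?_, ?_⟩ <;> rw [← ZMod.val_eq_zero] <;> omega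
    have hx := ZMod.val_lt x; have hy := ZMod.val_lt y; have hz := ZMod.val_lt z
    apply Hnat x.val y.val z.val (by omega) (by omega) (by omega) h1 hle
    rw [← Nat.cast_smul_eq_nsmul (ZMod m) x.val A, ← Nat.cast_smul_eq_nsmul (ZMod m) y.val B,
      ← Nat.cast_smul_eq_nsmul (ZMod m) z.val C, zs_cast_val, zs_cast_val, zs_cast_val]
    exact h0
  -- step 3 : pairwise independence
  have pairfin : ∀ P Q : ZMod m × ZMod m,
      (∀ u v : ZMod m, u • P + v • Q = 0 → u.val + v.val ≤ m → u = 0 ∧ v = 0) →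
      zs_pairIndep m P Q := by
    intro P Q key x y hxy
    rcases le_or_gt (x.val + y.val) m with hle | hgt
    · exact key x y hxy hle
    · have hx0 : x ≠ 0 := by
        intro h; subst h
        rw [ZMod.val_zero] at hgt
        have := ZMod.val_lt y; omega
      have hy0 : y ≠ 0 := by
        intro h; subst h
        rw [ZMod.val_zero] at hgt
        have := ZMod.val_lt x; omega
      have hneg : (-x) • P + (-y) • Q = 0 := by
        have e : (-x) • P + (-y) • Q = -(x • P + y • Q) := by module
        rw [e, hxy, neg_zero]
      have hlt := ZMod.val_lt x; have hlt' := ZMod.val_lt y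
      have := key (-x) (-y) hneg (by rw [zs_val_neg hx0, zs_val_neg hy0]; omega)
      exact absurd (neg_eq_zero.mp this.1) hx0
  have pAB : zs_pairIndep m A B := by
    apply pairfin
    intro u v huv hle
    have h0 : u • A + v • B + (0:ZMod m) • C = 0 := by rw [zero_smul, add_zero]; exact huv
    have := Hz u v 0 h0 (by rw [ZMod.val_zero]; omega)
    exact ⟨this.1, this.2.1⟩
  have pAC : zs_pairIndep m A C := by
    apply pairfin
    intro u v huv hle
    have h0 : u • A + (0:ZMod m) • B + v • C = 0 := by rw [zero_smul, add_zero]; exact huv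
    have := Hz u 0 v h0 (by rw [ZMod.val_zero]; omega)
    exact ⟨this.1, this.2.2⟩
  have pBC : zs_pairIndep m B C := by
    apply pairfin
    intro u v huv hle
    have h0 : (0:ZMod m) • A + u • B + v • C = 0 := by rw [zero_smul, zero_add]; exact huv
    have := Hz 0 u v h0 (by rw [ZMod.val_zero]; omega)
    exact ⟨this.2.1, this.2.2⟩
  -- step 4 : write C in the basis (A,B)
  obtain ⟨s, t, hC⟩ := zs_pair_surj m hm A B pAB C
  have hsu : IsUnit s := by
    by_contra hcon
    obtain ⟨k, hk0, hks⟩ := zs_killer hcon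
    have h0 : (k*t) • B + (-k) • C = 0 := by
      rw [hC]
      have e : (k*t) • B + (-k) • (s • A + t • B) = (-(k*s)) • A := by module
      rw [e, hks, neg_zero, zero_smul]
    exact hk0 (neg_eq_zero.mp (pBC (k*t) (-k) h0).2)
  have htu : IsUnit t := by
    by_contra hcon
    obtain ⟨k, hk0, hkt⟩ := zs_killer hcon
    have h0 : (k*s) • A + (-k) • C = 0 := by
      rw [hC]
      have e : (k*s) • A + (-k) • (s • A + t • B) = (-(k*t)) • B := by module
      rw [e, hkt, neg_zero, zero_smul]
    exact hk0 (neg_eq_zero.mp (pAC (k*s) (-k) h0).2)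
  -- step 5 : the key condition
  set p : ZMod m := -s with hpdef
  set q : ZMod m := -t with hqdef
  have hpu : IsUnit p := hsu.neg
  have hqu : IsUnit q := htu.neg
  have hrel : p • A + q • B + C = 0 := by rw [hpdef, hqdef, hC]; module
  have cond : ∀ γ : ZMod m, γ ≠ 0 → m + 1 ≤ (γ*p).val + (γ*q).val + γ.val := by
    intro γ hγ
    by_contra hcon
    push_neg at hcon
    have h0 : (γ*p) • A + (γ*q) • B + γ • C = 0 := by
      have e : (γ*p) • A + (γ*q) • B + γ • C = γ • (p • A + q • B + C) := by module
      rw [e, hrel, smul_zero]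
    have := Hz _ _ _ h0 (by omega)
    exact hγ this.2.2
  have condUB : ∀ γ : ZMod m, γ ≠ 0 → (γ*p).val + (γ*q).val + γ.val ≤ 2*m - 1 := by
    intro γ hγ
    have hγp : γ * p ≠ 0 := zs_unit_mul_ne hpu hγ
    have hγq : γ * q ≠ 0 := zs_unit_mul_ne hqu hγ
    have hneg := cond (-γ) (neg_ne_zero.mpr hγ)
    have e1 : (-γ)*p = -(γ*p) := by ring
    have e2 : (-γ)*q = -(γ*q) := by ring
    rw [e1, e2, zs_val_neg hγp, zs_val_neg hγq, zs_val_neg hγ] at hneg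
    have l1 := ZMod.val_lt (γ*p); have l2 := ZMod.val_lt (γ*q); have l3 := ZMod.val_lt γ
    have v1 := zs_val_pos hγp; have v2 := zs_val_pos hγq; have v3 := zs_val_pos hγ
    omega
  set w : ZMod m := 1 + p + q with hwdef
  have hwu : IsUnit w := by
    by_contra hcon
    obtain ⟨k, hk0, hkw⟩ := zs_killer hcon
    have h1 := cond k hk0
    have h2 := condUB k hk0
    have hcast : (((k*p).val + (k*q).val + k.val : ℕ) : ZMod m) = 0 := by
      push_cast [zs_cast_val]
      have e : k*p + k*q + k = k * w := by rw [hwdef]; ring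
      rw [e, hkw]
    obtain ⟨j, hj⟩ := (ZMod.natCast_eq_zero_iff _ _).mp hcast
    have := zs_div_absurd m j _ 0 hm (by omega) (by omega) h1 h2
    omega
  obtain ⟨w', hww'⟩ := hwu.exists_right_inv
  have hw'u : IsUnit w' := IsUnit.of_mul_eq_one w (by rw [mul_comm]; exact hww')
  have K : ∀ k : ZMod m, k ≠ 0 →
      (k*(p*w')).val + (k*(q*w')).val + (k*w').val = m + k.val := by
    intro k hk0
    have hγ0 : k * w' ≠ 0 := zs_unit_mul_ne hw'u hk0
    have h1 := cond (k*w') hγ0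
    have h2 := condUB (k*w') hγ0
    have e1 : (k*w')*p = k*(p*w') := by ring
    have e2 : (k*w')*q = k*(q*w') := by ring
    rw [e1, e2] at h1 h2
    have hkval := ZMod.val_lt k
    have hfk : k.val ≤ (k*(p*w')).val + (k*(q*w')).val + (k*w').val := by omega
    have hcast : (((k*(p*w')).val + (k*(q*w')).val + (k*w').val : ℕ) : ZMod m)
        = ((k.val : ℕ) : ZMod m) := by
      push_cast [zs_cast_val]
      have e : k*(p*w') + k*(q*w') + k*w' = k * (w' * w) := by rw [hwdef]; ring
      rw [e, mul_comm w' w, hww', mul_one]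
    have hsubcast : (((k*(p*w')).val + (k*(q*w')).val + (k*w').val - k.val : ℕ) : ZMod m)
        = 0 := by
      rw [Nat.cast_sub hfk, hcast, sub_self]
    obtain ⟨j, hj⟩ := (ZMod.natCast_eq_zero_iff _ _).mp hsubcast
    exact zs_div_absurd m j _ _ hm hj (by omega) h1 h2
  -- step 6 : part 2 of the conclusion
  have hABne : A ≠ B := zs_pair_ne hm pAB
  have hACne : A ≠ C := zs_pair_ne hm pAC
  have hBCne : B ≠ C := zs_pair_ne hm pBC
  constructor
  · -- main structural statement
    rcases zs_key m hm (p*w') (q*w') w' (hpu.mul hw'u) (hqu.mul hw'u) hw'u K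
      with hk1 | hk1 | hk1
    · -- p * w' = 1, so p = w, q = -1, t = 1
      have hpw : p = w := by
        have e : p * (w' * w) = 1 * w := by rw [← mul_assoc, hk1]
        rwa [mul_comm w' w, hww', mul_one, one_mul] at e
      have ht1 : t = 1 := by
        rw [hwdef, hpdef, hqdef] at hpw
        linear_combination hpw
      rcases le_or_gt (2 * (-s).val) m with hle | hgt
      · refine zs_finish m hm _ A B C rfl pAB (-s) hsu.neg hle ?_
        rw [neg_neg, hC, ht1, one_smul]
      · have hs0 : s ≠ 0 := zs_unit_ne_zero hm hsu
        have hns0 : (-s) ≠ 0 := neg_ne_zero.mpr hs0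
        have hvs : s.val = m - (-s).val := by
          have := zs_val_neg hns0
          rw [neg_neg] at this
          omega
        have hle2 : 2 * s.val ≤ m := by
          have := ZMod.val_lt (-s)
          omega
        refine zs_finish m hm _ A C B (zs_perm_acb A B C) pAC s hsu hle2 ?_
        rw [hC, ht1]
        module
    · -- q * w' = 1, so q = w, s = 1
      have hqw : q = w := by
        have e : q * (w' * w) = 1 * w := by rw [← mul_assoc, hk1]
        rwa [mul_comm w' w, hww', mul_one, one_mul] at e
      have hs1 : s = 1 := by
        rw [hwdef, hpdef, hqdef] at hqw
        linear_combination hqw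
      rcases le_or_gt (2 * (-t).val) m with hle | hgt
      · refine zs_finish m hm _ B A C (zs_perm_bac A B C) (zs_pair_swap pAB) (-t) htu.neg hle ?_
        rw [neg_neg, hC, hs1]
        module
      · have ht0 : t ≠ 0 := zs_unit_ne_zero hm htu
        have hnt0 : (-t) ≠ 0 := neg_ne_zero.mpr ht0
        have hvt : t.val = m - (-t).val := by
          have := zs_val_neg hnt0
          rw [neg_neg] at this
          omega
        have hle2 : 2 * t.val ≤ m := by
          have := ZMod.val_lt (-t)
          omega
        refine zs_finish m hm _ B C A (zs_perm_bca A B C) pBC t htu hle2 ?_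
        rw [hC, hs1]
        module
    · -- w' = 1, so w = 1, t = -s
      have hw1 : w = 1 := by
        have := hww'
        rw [hk1, mul_one] at this
        exact this
      have hts : t = -s := by
        rw [hwdef, hpdef, hqdef] at hw1
        linear_combination -hw1
      obtain ⟨v, hsv⟩ := hsu.exists_right_inv
      have hvs : v * s = 1 := by rw [mul_comm]; exact hsv
      have hvu : IsUnit v := IsUnit.of_mul_eq_one s hvs
      rcases le_or_gt (2 * v.val) m with hle | hgt
      · refine zs_finish m hm _ C A B (zs_perm_cab A B C) (zs_pair_swap pAC) v hvu hle ?_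
        rw [hC, hts]
        have e : (-v) • (s • A + (-s) • B) + A = (1 - v*s) • A + (v*s) • B := by module
        rw [e, hvs]
        module
      · have hv0 : v ≠ 0 := zs_unit_ne_zero hm hvu
        have hnv0 : (-v) ≠ 0 := neg_ne_zero.mpr hv0
        have hvv : (-v).val = m - v.val := zs_val_neg hv0
        have hle2 : 2 * (-v).val ≤ m := by
          have := ZMod.val_lt v
          omega
        refine zs_finish m hm _ C B A (zs_perm_cba A B C) (zs_pair_swap pBC) (-v) hvu.neg hle2 ?_
        rw [neg_neg, hC, hts]
        have e : v • (s • A + (-s) • B) + B = (v*s) • A + (1 - v*s) • B := by module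
        rw [e, hvs]
        module
  · -- part 2
    intro f hf
    have hf' : f = A ∨ f = B ∨ f = C := by simpa using hf
    rcases hf' with rfl | rfl | rfl
    · have he : ({f,B,C} : Multiset (ZMod m × ZMod m)).erase f = {B, C} := by
        rw [Multiset.insert_eq_cons, Multiset.erase_cons_head]
      rw [he]
      exact zs_nozero m hm B C pBC
    · have he : ({A,f,C} : Multiset (ZMod m × ZMod m)).erase f = A ::ₘ {C} := by
        rw [Multiset.insert_eq_cons, Multiset.insert_eq_cons,
          Multiset.erase_cons_tail _ hABne, Multiset.erase_cons_head]
      rw [he]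
      have := zs_nozero m hm A C pAC
      rwa [Multiset.insert_eq_cons] at this
    · have he : ({A,B,f} : Multiset (ZMod m × ZMod m)).erase f = A ::ₘ {B} := by
        rw [Multiset.insert_eq_cons, Multiset.insert_eq_cons,
          Multiset.erase_cons_tail _ hACne, Multiset.erase_cons_tail _ hBCne,
          Multiset.erase_singleton, Multiset.cons_zero]
      rw [he]
      have := zs_nozero m hm A B pAB
      rwa [Multiset.insert_eq_cons] at this
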